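/- arXiv:cond-mat/0004005 — 7 statements merged into one kernel-verified Lean document; each statement's English description precedes it below -/
import Mathlib

section
/- Assume ∫_{ℝ^d} |V(k)|²/ε(k) dk = +∞. Then for every g > 0 and every ε_d ∈ ℝ there exists a unique λ₁ > 0 satisfying the self-consistency equation λ₁ = g²·∫ |V(k)|²/(ε(k)+λ₁) dk − ε_d. -/
open MeasureTheory Set Filter
open scoped ENNReal Topology

namespace AndersonAux

variable {α : Type*} [MeasurableSpace α] {μ : Measure α} {a b : α → ℝ}

lemma integrable_quot (ha : Integrable a μ) (ha0 : ∀ᵐ k ∂μ, 0 ≤ a k)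
    (hbm : AEMeasurable b μ) (hb0 : ∀ᵐ k ∂μ, 0 ≤ b k) {l : ℝ} (hl : 0 < l) :
    Integrable (fun k => a k / (b k + l)) μ := by
  have hmeas : AEStronglyMeasurable (fun k => a k / (b k + l)) μ :=
    (ha.aemeasurable.div (hbm.add_const l)).aestronglyMeasurable
  refine (ha.div_const l).mono hmeas ?_
  filter_upwards [ha0, hb0] with k hak hbk
  rw [Real.norm_eq_abs, Real.norm_eq_abs, abs_of_nonneg (div_nonneg hak (by linarith)),
    abs_of_nonneg (div_nonneg hak hl.le)]
  gcongr
  linarith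

lemma integral_quot_mono (ha : Integrable a μ) (ha0 : ∀ᵐ k ∂μ, 0 ≤ a k)
    (hbm : AEMeasurable b μ) (hb0 : ∀ᵐ k ∂μ, 0 ≤ b k) {l m : ℝ} (hl : 0 < l) (hlm : l ≤ m) :
    ∫ k, a k / (b k + m) ∂μ ≤ ∫ k, a k / (b k + l) ∂μ := by
  refine integral_mono_ae (integrable_quot ha ha0 hbm hb0 (hl.trans_le hlm))
    (integrable_quot ha ha0 hbm hb0 hl) ?_
  filter_upwards [ha0, hb0] with k hak hbk
  gcongr <;> linarith

lemma continuousAt_integral_quot (ha : Integrable a μ) (ha0 : ∀ᵐ k ∂μ, 0 ≤ a k)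
    (hbm : AEMeasurable b μ) (hb0 : ∀ᵐ k ∂μ, 0 ≤ b k) {l : ℝ} (hl : 0 < l) :
    ContinuousAt (fun x : ℝ => ∫ k, a k / (b k + x) ∂μ) l := by
  have hev : ∀ᶠ x in 𝓝 l, l / 2 < x := eventually_gt_nhds (by linarith)
  refine continuousAt_of_dominated (bound := fun k => a k / (l / 2)) ?_ ?_
    (ha.div_const (l / 2)) ?_
  · exact Eventually.of_forall fun x =>
      (ha.aemeasurable.div (hbm.add_const x)).aestronglyMeasurable
  · filter_upwards [hev] with x hx
    filter_upwards [ha0, hb0] with k hak hbk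
    rw [Real.norm_eq_abs, abs_of_nonneg (div_nonneg hak (by linarith))]
    gcongr <;> linarith
  · filter_upwards [hb0] with k hbk
    exact ContinuousAt.div continuousAt_const (continuousAt_const.add continuousAt_id)
      (by positivity)

lemma exists_small (ha : Integrable a μ) (ha0 : ∀ᵐ k ∂μ, 0 ≤ a k)
    (hbm : AEMeasurable b μ) (hb0 : ∀ᵐ k ∂μ, 0 ≤ b k)
    (hdiv : ∫⁻ k, ENNReal.ofReal (a k) / ENNReal.ofReal (b k) ∂μ = ⊤) (C : ℝ) :
    ∃ l : ℝ, 0 < l ∧ l ≤ 1 ∧ C ≤ ∫ k, a k / (b k + l) ∂μ := by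
  set A : α → ℝ≥0∞ := fun k => ENNReal.ofReal (a k) with hA
  set B : α → ℝ≥0∞ := fun k => ENNReal.ofReal (b k) with hB
  have hAm : AEMeasurable A μ := ha.aemeasurable.ennreal_ofReal
  have hBm : AEMeasurable B μ := hbm.ennreal_ofReal
  set r : ℕ → ℝ := fun n => 1 / (n + 1) with hrdef
  have hr0 : ∀ n, 0 < r n := fun n => by positivity
  have hr1 : ∀ n, r n ≤ 1 := by
    intro n
    rw [hrdef, div_le_one (by positivity)]
    linarith [Nat.cast_nonneg (α := ℝ) n]
  have hrtend : Tendsto (fun n => ENNReal.ofReal (r n)) atTop (𝓝 0) := by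
    rw [← ENNReal.ofReal_zero]
    exact ENNReal.tendsto_ofReal tendsto_one_div_add_atTop_nhds_zero_nat
  have hrantitone : Antitone fun n => ENNReal.ofReal (r n) := by
    intro n m hnm
    apply ENNReal.ofReal_le_ofReal
    have hc : (n:ℝ) ≤ m := Nat.cast_le.mpr hnm
    apply one_div_le_one_div_of_le (by positivity)
    linarith
  have key : Tendsto (fun n => ∫⁻ k, A k / (B k + ENNReal.ofReal (r n)) ∂μ) atTop
      (𝓝 (∫⁻ k, A k / B k ∂μ)) := by
    apply lintegral_tendsto_of_tendsto_of_monotone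
    · exact fun n => hAm.div (hBm.add aemeasurable_const)
    · refine Eventually.of_forall fun k n m hnm => ?_
      exact ENNReal.div_le_div_left (add_le_add le_rfl (hrantitone hnm)) _
    · refine Eventually.of_forall fun k => ?_
      have hAk : A k ≠ ⊤ := ENNReal.ofReal_ne_top
      have h1 : Tendsto (fun n => B k + ENNReal.ofReal (r n)) atTop (𝓝 (B k)) := by
        simpa using tendsto_const_nhds.add hrtend
      have h2 : Tendsto (fun n => (B k + ENNReal.ofReal (r n))⁻¹) atTop (𝓝 (B k)⁻¹) :=
        ENNReal.tendsto_inv_iff.2 h1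
      simpa [div_eq_mul_inv] using ENNReal.Tendsto.const_mul h2 (Or.inr hAk)
  rw [hdiv] at key
  have hev : ∀ᶠ n in atTop, ENNReal.ofReal C < ∫⁻ k, A k / (B k + ENNReal.ofReal (r n)) ∂μ := by
    have : ∀ᶠ x in 𝓝 (⊤ : ℝ≥0∞), ENNReal.ofReal C < x :=
      eventually_gt_nhds (ENNReal.ofReal_lt_top)
    exact key.eventually this
  obtain ⟨n, hn⟩ := hev.exists
  refine ⟨r n, hr0 n, hr1 n, ?_⟩
  have hInt : Integrable (fun k => a k / (b k + r n)) μ :=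
    integrable_quot ha ha0 hbm hb0 (hr0 n)
  have hnonneg : 0 ≤ᵐ[μ] fun k => a k / (b k + r n) := by
    filter_upwards [ha0, hb0] with k hak hbk
    exact div_nonneg hak (by linarith [hr0 n])
  have hcongr : ∫⁻ k, ENNReal.ofReal (a k / (b k + r n)) ∂μ
      = ∫⁻ k, A k / (B k + ENNReal.ofReal (r n)) ∂μ := by
    apply lintegral_congr_ae
    filter_upwards [hb0] with k hbk
    rw [ENNReal.ofReal_div_of_pos (by linarith [hr0 n]), ENNReal.ofReal_add hbk (hr0 n).le]
  have heq : ∫ k, a k / (b k + r n) ∂μ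
      = (∫⁻ k, A k / (B k + ENNReal.ofReal (r n)) ∂μ).toReal := by
    rw [integral_eq_lintegral_of_nonneg_ae hnonneg hInt.aestronglyMeasurable, hcongr]
  have hfin : (∫⁻ k, A k / (B k + ENNReal.ofReal (r n)) ∂μ) ≠ ⊤ := by
    rw [← hcongr]
    exact ((hasFiniteIntegral_iff_ofReal hnonneg).mp hInt.hasFiniteIntegral).ne
  rw [heq]
  exact (ENNReal.ofReal_le_iff_le_toReal hfin).mp hn.le

end AndersonAux

/-- Assume `∫ |V k|² / ε k dk = +∞`. Then for every `g > 0` and every `εd ∈ ℝ` there is a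
unique `λ₁ > 0` solving the self-consistency equation
`λ₁ = g² · ∫ |V k|² / (ε k + λ₁) dk − εd`. -/
theorem anderson_selfconsistency_existsUnique {d : ℕ} (hd : 0 < d)
    (ε : EuclideanSpace ℝ (Fin d) → ℝ) (hε : Measurable ε)
    (hε0 : ∀ᵐ k ∂volume, 0 ≤ ε k)
    (V : EuclideanSpace ℝ (Fin d) → ℂ) (hV : MemLp V 2 volume)
    (hdiv : ∫⁻ k, ENNReal.ofReal (‖V k‖ ^ 2) / ENNReal.ofReal (ε k) ∂volume = ⊤) :
    ∀ g εd : ℝ, 0 < g →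
      ∃! lam : ℝ, 0 < lam ∧
        lam = g ^ 2 * (∫ k, ‖V k‖ ^ 2 / (ε k + lam)) - εd := by
  intro g εd hg
  set a : EuclideanSpace ℝ (Fin d) → ℝ := fun k => ‖V k‖ ^ 2 with haa
  have ha : Integrable a volume := hV.norm.integrable_sq
  have ha0 : ∀ᵐ k ∂(volume : Measure (EuclideanSpace ℝ (Fin d))), 0 ≤ a k :=
    Eventually.of_forall fun k => sq_nonneg _
  have hbm : AEMeasurable ε (volume : Measure (EuclideanSpace ℝ (Fin d))) := hε.aemeasurable
  set I : ℝ → ℝ := fun l => ∫ k, a k / (ε k + l) with hI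
  -- monotonicity of I
  have hImono : ∀ {l m : ℝ}, 0 < l → l ≤ m → I m ≤ I l := fun hl hlm =>
    AndersonAux.integral_quot_mono ha ha0 hbm hε0 hl hlm
  -- large lambda bound
  have hC0 : (0:ℝ) ≤ ∫ k, a k := integral_nonneg fun k => sq_nonneg _
  set C0 : ℝ := ∫ k, a k with hC0def
  -- small lambda
  obtain ⟨ls, hls0, hls1, hlsC⟩ :=
    AndersonAux.exists_small ha ha0 hbm hε0 hdiv ((εd + 2) / g ^ 2)
  have hg2 : (0:ℝ) < g ^ 2 := by positivity
  have hFs : εd + 2 ≤ g ^ 2 * I ls := by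
    have := mul_le_mul_of_nonneg_left hlsC hg2.le
    calc εd + 2 = g ^ 2 * ((εd + 2) / g ^ 2) := by field_simp
    _ ≤ g ^ 2 * I ls := this
  -- big lambda
  set lb : ℝ := max (ls + 1) (max 1 (g ^ 2 * C0 - εd + 1)) with hlbdef
  have hlb1 : (1:ℝ) ≤ lb := le_trans (le_max_left _ _) (le_max_right _ _)
  have hlb2 : g ^ 2 * C0 - εd + 1 ≤ lb := le_trans (le_max_right _ _) (le_max_right _ _)
  have hlslb : ls < lb := lt_of_lt_of_le (by linarith) (le_max_left _ _)
  have hlb0 : (0:ℝ) < lb := by linarith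
  have hIlb : I lb ≤ C0 := by
    have h1 : I lb ≤ ∫ k, a k / lb := by
      refine integral_mono_ae (AndersonAux.integrable_quot ha ha0 hbm hε0 hlb0)
        (ha.div_const lb) ?_
      filter_upwards [ha0, hε0] with k hak hbk
      gcongr <;> linarith
    have h2 : ∫ k, a k / lb = C0 / lb := by rw [integral_div]
    have h3 : C0 / lb ≤ C0 := by
      rw [div_le_iff₀ (by linarith)]
      nlinarith
    linarith
  -- the function F
  set F : ℝ → ℝ := fun l => g ^ 2 * I l - εd - l with hF
  have hFls : 1 ≤ F ls := by
    simp only [hF]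
    linarith
  have hFlb : F lb ≤ -1 := by
    simp only [hF]
    nlinarith
  have hcont : ContinuousOn F (Icc ls lb) := by
    intro x hx
    have hx0 : 0 < x := lt_of_lt_of_le hls0 hx.1
    have h1 : ContinuousAt I x := AndersonAux.continuousAt_integral_quot ha ha0 hbm hε0 hx0
    exact (((continuousAt_const.mul h1).sub continuousAt_const).sub
      continuousAt_id).continuousWithinAt
  have hmem : (0:ℝ) ∈ Icc (F lb) (F ls) := ⟨by linarith, by linarith⟩
  obtain ⟨lam, hlamIcc, hlamF⟩ := intermediate_value_Icc' hlslb.le hcont hmem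
  have hlam0 : 0 < lam := lt_of_lt_of_le hls0 hlamIcc.1
  have hlameq : lam = g ^ 2 * I lam - εd := by
    have : g ^ 2 * I lam - εd - lam = 0 := hlamF
    linarith
  refine ⟨lam, ⟨hlam0, hlameq⟩, ?_⟩
  rintro y ⟨hy0, hyeq⟩
  by_contra hne
  rcases lt_or_gt_of_ne hne with h | h
  · have hIle : I lam ≤ I y := hImono hy0 h.le
    have : lam ≤ y := by
      rw [hlameq, hyeq]
      nlinarith
    linarith
  · have hIle : I y ≤ I lam := hImono hlam0 h.le
    have : y ≤ lam := by
      rw [hlameq, hyeq]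
      nlinarith
    linarith
end

section
/- For every μ ≥ λ₁ one has φ(μ) > 0. More precisely: (i) if λ₁ ≤ μ ≤ λ₁ + U·(1+x₁²)⁻², then φ(μ) ≥ U; (ii) if μ > λ₁ + U·(1+x₁²)⁻², then φ(μ) ≥ U + (1+x₁²)·(μ−λ₁). In particular φ has no zero in [λ₁, ∞). -/
open MeasureTheory Set

/-- For every `μ ≥ λ₁` one has `φ(μ) > 0`. More precisely: (i) if
`λ₁ ≤ μ ≤ λ₁ + U·(1+x₁²)⁻²` then `φ(μ) ≥ U`; (ii) if `μ > λ₁ + U·(1+x₁²)⁻²` then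
`φ(μ) ≥ U + (1+x₁²)·(μ−λ₁)`. In particular `φ` has no zero in `[λ₁, ∞)`. -/
theorem anderson_phi_pos_on_Ici {d : ℕ} (hd : 0 < d)
    (ε : EuclideanSpace ℝ (Fin d) → ℝ) (hε : Measurable ε)
    (hε0 : ∀ᵐ k ∂volume, 0 ≤ ε k)
    (f₁ : EuclideanSpace ℝ (Fin d) → ℂ) (hf₁ : MemLp f₁ 2 volume)
    (hf₁norm : ∫ k, ‖f₁ k‖ ^ 2 = 1)
    (U lam₁ x₁ : ℝ) (hU : 0 < U) (hlam₁ : 0 < lam₁)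
    (W φ : ℝ → ℝ)
    (hW : ∀ μ, W μ = ∫ k, ‖f₁ k‖ ^ 2 / (ε k + μ))
    (hφ : ∀ μ, φ μ = U + (1 + x₁ ^ 2) ^ 2 * (μ - lam₁) +
        x₁ ^ 2 / (1 + x₁ ^ 2) * (μ - lam₁) *
          (U - (1 + x₁ ^ 2) ^ 2 * (μ - lam₁)) * W μ) :
    (∀ μ, lam₁ ≤ μ → μ ≤ lam₁ + U / (1 + x₁ ^ 2) ^ 2 → U ≤ φ μ) ∧
      (∀ μ, lam₁ + U / (1 + x₁ ^ 2) ^ 2 < μ →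
        U + (1 + x₁ ^ 2) * (μ - lam₁) ≤ φ μ) ∧
      ∀ μ, lam₁ ≤ μ → 0 < φ μ := by
  have hs : (0:ℝ) < 1 + x₁ ^ 2 := by positivity
  -- integrability of ‖f₁‖²
  have hint : Integrable (fun k => ‖f₁ k‖ ^ 2) volume := by
    have := hf₁.integrable_norm_rpow two_ne_zero ENNReal.ofNat_ne_top
    simpa [ENNReal.toReal_ofNat, Real.rpow_natCast] using this
  -- for each μ ≥ lam₁ : 0 ≤ W μ and W μ ≤ 1/μ
  have key : ∀ μ : ℝ, lam₁ ≤ μ → 0 ≤ W μ ∧ W μ ≤ 1 / μ := by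
    intro μ hμ
    have hμ0 : 0 < μ := lt_of_lt_of_le hlam₁ hμ
    have haem : AEStronglyMeasurable (fun k => ‖f₁ k‖ ^ 2 / (ε k + μ)) volume := by
      exact ((hf₁.1.norm.aemeasurable.pow_const 2).div
        ((hε.aemeasurable).add_const μ)).aestronglyMeasurable
    have hbound : ∀ᵐ k ∂volume, ‖‖f₁ k‖ ^ 2 / (ε k + μ)‖ ≤ ‖f₁ k‖ ^ 2 / μ := by
      filter_upwards [hε0] with k hk
      have hden : 0 < ε k + μ := by linarith
      rw [Real.norm_eq_abs, abs_of_nonneg (by positivity)]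
      exact div_le_div_of_nonneg_left (by positivity) hμ0 (by linarith)
    have hgint : Integrable (fun k => ‖f₁ k‖ ^ 2 / (ε k + μ)) volume :=
      (hint.div_const μ).mono' haem hbound
    constructor
    · rw [hW]
      refine integral_nonneg_of_ae ?_
      filter_upwards [hε0] with k hk
      have hden : 0 < ε k + μ := by linarith
      positivity
    · rw [hW]
      calc ∫ k, ‖f₁ k‖ ^ 2 / (ε k + μ) ≤ ∫ k, ‖f₁ k‖ ^ 2 / μ := by
            refine integral_mono_ae hgint (hint.div_const μ) ?_
            filter_upwards [hε0] with k hk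
            have hden : 0 < ε k + μ := by linarith
            exact div_le_div_of_nonneg_left (by positivity) hμ0 (by linarith)
        _ = 1 / μ := by rw [integral_div, hf₁norm]
  have part1 : ∀ μ, lam₁ ≤ μ → μ ≤ lam₁ + U / (1 + x₁ ^ 2) ^ 2 → U ≤ φ μ := by
    intro μ h1 h2
    obtain ⟨hW0, _⟩ := key μ h1
    have hA : 0 ≤ U - (1 + x₁ ^ 2) ^ 2 * (μ - lam₁) := by
      have : (1 + x₁ ^ 2) ^ 2 * (μ - lam₁) ≤ U := by
        rw [← le_div_iff₀' (by positivity)]; linarith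
      linarith
    rw [hφ]
    have hterm : 0 ≤ x₁ ^ 2 / (1 + x₁ ^ 2) * (μ - lam₁) *
        (U - (1 + x₁ ^ 2) ^ 2 * (μ - lam₁)) * W μ := by
      have hδ : 0 ≤ μ - lam₁ := by linarith
      positivity
    nlinarith [sq_nonneg (1 + x₁ ^ 2), sq_nonneg x₁]
  have part2 : ∀ μ, lam₁ + U / (1 + x₁ ^ 2) ^ 2 < μ →
      U + (1 + x₁ ^ 2) * (μ - lam₁) ≤ φ μ := by
    intro μ h2
    have h1 : lam₁ ≤ μ := by
      have : 0 < U / (1 + x₁ ^ 2) ^ 2 := by positivity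
      linarith
    have hμ0 : 0 < μ := lt_of_lt_of_le hlam₁ h1
    obtain ⟨hW0, hW1⟩ := key μ h1
    have hA : U - (1 + x₁ ^ 2) ^ 2 * (μ - lam₁) < 0 := by
      have : U / (1 + x₁ ^ 2) ^ 2 < μ - lam₁ := by linarith
      have := (div_lt_iff₀ (show (0:ℝ) < (1 + x₁ ^ 2) ^ 2 by positivity)).mp this
      nlinarith
    rw [hφ]
    set A := U - (1 + x₁ ^ 2) ^ 2 * (μ - lam₁) with hAdef
    have hδ : 0 < μ - lam₁ := by
      have : 0 < U / (1 + x₁ ^ 2) ^ 2 := by positivity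
      linarith
    -- A * W μ ≥ A / μ  since A < 0, W μ ≤ 1/μ
    have hAW : A / μ ≤ A * W μ := by
      rw [div_eq_mul_one_div]
      exact mul_le_mul_of_nonpos_left hW1 (le_of_lt hA)
    have hc : 0 ≤ x₁ ^ 2 / (1 + x₁ ^ 2) * (μ - lam₁) := by positivity
    have hstep : x₁ ^ 2 / (1 + x₁ ^ 2) * (μ - lam₁) * (A / μ) ≤
        x₁ ^ 2 / (1 + x₁ ^ 2) * (μ - lam₁) * A * W μ := by
      calc x₁ ^ 2 / (1 + x₁ ^ 2) * (μ - lam₁) * (A / μ)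
          ≤ x₁ ^ 2 / (1 + x₁ ^ 2) * (μ - lam₁) * (A * W μ) :=
            mul_le_mul_of_nonneg_left hAW hc
        _ = x₁ ^ 2 / (1 + x₁ ^ 2) * (μ - lam₁) * A * W μ := by ring
    -- remains: U + s²δ + (x₁²/s)·δ·A/μ ≥ U + s·δ
    have hfinal : (1 + x₁ ^ 2) * (μ - lam₁) ≤
        (1 + x₁ ^ 2) ^ 2 * (μ - lam₁) + x₁ ^ 2 / (1 + x₁ ^ 2) * (μ - lam₁) * (A / μ) := by
      rw [← sub_nonneg]
      have heq : (1 + x₁ ^ 2) ^ 2 * (μ - lam₁) +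
          x₁ ^ 2 / (1 + x₁ ^ 2) * (μ - lam₁) * (A / μ) - (1 + x₁ ^ 2) * (μ - lam₁) =
          x₁ ^ 2 * (μ - lam₁) * ((1 + x₁ ^ 2) ^ 2 * lam₁ + U) / ((1 + x₁ ^ 2) * μ) := by
        rw [hAdef]; field_simp; ring
      rw [heq]; positivity
    linarith [hstep, hfinal]
  refine ⟨part1, part2, ?_⟩
  intro μ h1
  by_cases h : μ ≤ lam₁ + U / (1 + x₁ ^ 2) ^ 2
  · exact lt_of_lt_of_le hU (part1 μ h1 h)
  · have := part2 μ (lt_of_not_ge h)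
    have hδ : 0 ≤ μ - lam₁ := by linarith
    nlinarith [sq_nonneg x₁]
end

section
/- The function φ is strictly increasing on the open interval (0, λ₁). -/
open MeasureTheory Set

/-- The function `φ` is strictly increasing on the open interval `(0, λ₁)`. -/
theorem anderson_phi_strictMonoOn {d : ℕ} (hd : 0 < d)
    (ε : EuclideanSpace ℝ (Fin d) → ℝ) (hε : Measurable ε)
    (hε0 : ∀ᵐ k ∂volume, 0 ≤ ε k)
    (f₁ : EuclideanSpace ℝ (Fin d) → ℂ) (hf₁ : MemLp f₁ 2 volume)
    (hf₁norm : ∫ k, ‖f₁ k‖ ^ 2 = 1)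
    (U lam₁ x₁ : ℝ) (hU : 0 < U) (hlam₁ : 0 < lam₁)
    (W φ : ℝ → ℝ)
    (hW : ∀ μ, W μ = ∫ k, ‖f₁ k‖ ^ 2 / (ε k + μ))
    (hφ : ∀ μ, φ μ = U + (1 + x₁ ^ 2) ^ 2 * (μ - lam₁) +
        x₁ ^ 2 / (1 + x₁ ^ 2) * (μ - lam₁) *
          (U - (1 + x₁ ^ 2) ^ 2 * (μ - lam₁)) * W μ) :
    StrictMonoOn φ (Ioo 0 lam₁) := by
  have hsq : Integrable (fun k => ‖f₁ k‖ ^ 2) volume := by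
    have := hf₁.norm.integrable_sq
    simpa [pow_two] using this
  -- integrability of the integrand of W for μ > 0
  have hint : ∀ μ : ℝ, 0 < μ →
      Integrable (fun k => ‖f₁ k‖ ^ 2 / (ε k + μ)) volume := by
    intro μ hμ
    refine Integrable.mono' (hsq.div_const μ) ?_ ?_
    · exact ((hf₁.aestronglyMeasurable.aemeasurable.norm.pow aemeasurable_const).div
        ((hε.aemeasurable.add aemeasurable_const))).aestronglyMeasurable
    · filter_upwards [hε0] with k hk
      have h1 : (0:ℝ) < ε k + μ := by linarith
      rw [Real.norm_eq_abs, abs_of_nonneg (div_nonneg (by positivity) h1.le)]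
      exact div_le_div_of_nonneg_left (by positivity) hμ (by linarith) |>.trans_eq rfl
  -- W is nonnegative for μ > 0
  have hWnn : ∀ μ : ℝ, 0 < μ → 0 ≤ W μ := by
    intro μ hμ
    rw [hW]
    refine integral_nonneg_of_ae ?_
    filter_upwards [hε0] with k hk
    have : (0:ℝ) < ε k + μ := by linarith
    positivity
  -- W is antitone
  have hWanti : ∀ a b : ℝ, 0 < a → a ≤ b → W b ≤ W a := by
    intro a b ha hab
    rw [hW, hW]
    refine integral_mono_ae (hint b (lt_of_lt_of_le ha hab)) (hint a ha) ?_
    filter_upwards [hε0] with k hk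
    exact div_le_div_of_nonneg_left (by positivity) (by linarith) (by linarith)
  intro a ha b hb hab
  rw [hφ, hφ]
  set A : ℝ := (1 + x₁ ^ 2) ^ 2 with hA
  set c : ℝ := x₁ ^ 2 / (1 + x₁ ^ 2) with hc
  have hA0 : 0 < A := by positivity
  have hc0 : 0 ≤ c := by positivity
  obtain ⟨ha0, ha1⟩ := ha
  obtain ⟨hb0, hb1⟩ := hb
  have hWa := hWnn a ha0
  have hWb := hWnn b hb0
  have hWba := hWanti a b ha0 hab.le
  -- g(μ) = (μ - lam₁) * (U - A * (μ - lam₁))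
  have hg_le : (a - lam₁) * (U - A * (a - lam₁)) ≤ (b - lam₁) * (U - A * (b - lam₁)) := by
    nlinarith [mul_pos hA0 (sub_pos.2 hab), sub_pos.2 ha1, sub_pos.2 hb1]
  have hgb_le : (b - lam₁) * (U - A * (b - lam₁)) ≤ 0 := by
    have h2 : 0 < U - A * (b - lam₁) := by nlinarith [mul_pos hA0 (sub_pos.2 hb1)]
    exact mul_nonpos_of_nonpos_of_nonneg (by linarith) h2.le
  have key : c * (a - lam₁) * (U - A * (a - lam₁)) * W a ≤
      c * (b - lam₁) * (U - A * (b - lam₁)) * W b := by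
    have h1 : c * ((a - lam₁) * (U - A * (a - lam₁))) * W a ≤
        c * ((b - lam₁) * (U - A * (b - lam₁))) * W a :=
      mul_le_mul_of_nonneg_right (mul_le_mul_of_nonneg_left hg_le hc0) hWa
    have h2 : c * ((b - lam₁) * (U - A * (b - lam₁))) * W a ≤
        c * ((b - lam₁) * (U - A * (b - lam₁))) * W b := by
      have hcg : c * ((b - lam₁) * (U - A * (b - lam₁))) ≤ 0 :=
        mul_nonpos_of_nonneg_of_nonpos hc0 hgb_le
      exact mul_le_mul_of_nonpos_left hWba hcg
    calc c * (a - lam₁) * (U - A * (a - lam₁)) * W a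
        = c * ((a - lam₁) * (U - A * (a - lam₁))) * W a := by ring
      _ ≤ c * ((b - lam₁) * (U - A * (b - lam₁))) * W b := h1.trans h2
      _ = c * (b - lam₁) * (U - A * (b - lam₁)) * W b := by ring
  have hlin : A * (a - lam₁) < A * (b - lam₁) :=
    mul_lt_mul_of_pos_left (by linarith) hA0
  linarith
end

section
/- Assume x₁ ≠ 0 and ∫ |f₁(k)|²/ε(k) dk = +∞. Then φ(μ) → −∞ as μ → 0⁺. -/
open MeasureTheory Set Filter Topology
open scoped ENNReal

/-- Assume `x₁ ≠ 0` and `∫ |f₁ k|²/ε k dk = +∞`. Then `φ(μ) → −∞` as `μ → 0⁺`. -/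
theorem anderson_phi_tendsto_atBot {d : ℕ} (hd : 0 < d)
    (ε : EuclideanSpace ℝ (Fin d) → ℝ) (hε : Measurable ε)
    (hε0 : ∀ᵐ k ∂volume, 0 ≤ ε k)
    (f₁ : EuclideanSpace ℝ (Fin d) → ℂ) (hf₁ : MemLp f₁ 2 volume)
    (hf₁norm : ∫ k, ‖f₁ k‖ ^ 2 = 1)
    (U lam₁ x₁ : ℝ) (hU : 0 < U) (hlam₁ : 0 < lam₁) (hx₁ : x₁ ≠ 0)
    (hdiv : ∫⁻ k, ENNReal.ofReal (‖f₁ k‖ ^ 2) / ENNReal.ofReal (ε k) ∂volume = ⊤)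
    (W φ : ℝ → ℝ)
    (hW : ∀ μ, W μ = ∫ k, ‖f₁ k‖ ^ 2 / (ε k + μ))
    (hφ : ∀ μ, φ μ = U + (1 + x₁ ^ 2) ^ 2 * (μ - lam₁) +
        x₁ ^ 2 / (1 + x₁ ^ 2) * (μ - lam₁) *
          (U - (1 + x₁ ^ 2) ^ 2 * (μ - lam₁)) * W μ) :
    Tendsto φ (nhdsWithin 0 (Ioi 0)) atBot := by
  have hInt2 : Integrable (fun k => ‖f₁ k‖ ^ 2) volume := by
    have := hf₁.integrable_norm_rpow (by norm_num) (by norm_num)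
    simpa [ENNReal.toReal_ofNat, Real.rpow_natCast] using this
  have haesm : AEStronglyMeasurable (fun k => ‖f₁ k‖ ^ 2) volume :=
    hInt2.aestronglyMeasurable
  have hIntμ : ∀ μ : ℝ, 0 < μ → Integrable (fun k => ‖f₁ k‖ ^ 2 / (ε k + μ)) volume := by
    intro μ hμ
    refine Integrable.mono' (hInt2.mul_const μ⁻¹) ?_ ?_
    · exact (haesm.aemeasurable.div
        ((hε.aemeasurable.add aemeasurable_const))).aestronglyMeasurable
    · filter_upwards [hε0] with k hk
      have h1 : 0 < ε k + μ := by linarith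
      rw [Real.norm_eq_abs, abs_of_nonneg (div_nonneg (by positivity) h1.le),
        ← div_eq_mul_inv]
      exact div_le_div_of_nonneg_left (by positivity) hμ (by linarith)
  have hWnn : ∀ μ : ℝ, 0 < μ → 0 ≤ W μ := by
    intro μ hμ
    rw [hW]
    refine integral_nonneg_of_ae ?_
    filter_upwards [hε0] with k hk
    have : 0 < ε k + μ := by linarith
    positivity
  have hWmono : ∀ μ μ' : ℝ, 0 < μ → μ ≤ μ' → W μ' ≤ W μ := by
    intro μ μ' hμ hle
    rw [hW, hW]
    refine integral_mono_ae (hIntμ μ' (lt_of_lt_of_le hμ hle)) (hIntμ μ hμ) ?_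
    filter_upwards [hε0] with k hk
    exact div_le_div_of_nonneg_left (by positivity) (by linarith) (by linarith)
  -- pointwise identity between the two integrands
  have hcongr : ∀ μ : ℝ, 0 < μ →
      (∫⁻ k, ENNReal.ofReal (‖f₁ k‖ ^ 2) /
        (ENNReal.ofReal (ε k) + ENNReal.ofReal μ) ∂volume)
      = ∫⁻ k, ENNReal.ofReal (‖f₁ k‖ ^ 2 / (ε k + μ)) ∂volume := by
    intro μ hμ
    refine lintegral_congr_ae ?_
    filter_upwards [hε0] with k hk
    have h1 : 0 < ε k + μ := by linarith
    rw [ENNReal.ofReal_div_of_pos h1, ENNReal.ofReal_add hk hμ.le]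
  have hWeq : ∀ μ : ℝ, 0 < μ →
      W μ = (∫⁻ k, ENNReal.ofReal (‖f₁ k‖ ^ 2) /
        (ENNReal.ofReal (ε k) + ENNReal.ofReal μ) ∂volume).toReal := by
    intro μ hμ
    rw [hW, hcongr μ hμ]
    rw [integral_eq_lintegral_of_nonneg_ae]
    · filter_upwards [hε0] with k hk
      have h1 : 0 < ε k + μ := by linarith
      positivity
    · exact (hIntμ μ hμ).aestronglyMeasurable
  have hfin : ∀ μ : ℝ, 0 < μ →
      (∫⁻ k, ENNReal.ofReal (‖f₁ k‖ ^ 2) /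
        (ENNReal.ofReal (ε k) + ENNReal.ofReal μ) ∂volume) ≠ ⊤ := by
    intro μ hμ
    rw [hcongr μ hμ]
    have h := (hIntμ μ hμ).hasFiniteIntegral
    rw [hasFiniteIntegral_iff_ofReal] at h
    · exact h.ne
    · filter_upwards [hε0] with k hk
      have h1 : 0 < ε k + μ := by linarith
      positivity
  -- the lintegrals tend to ⊤ along μ = 1/(n+1)
  have haem : AEMeasurable (fun k => ENNReal.ofReal (‖f₁ k‖ ^ 2)) volume :=
    ENNReal.measurable_ofReal.comp_aemeasurable haesm.aemeasurable
  set g : ℕ → EuclideanSpace ℝ (Fin d) → ℝ≥0∞ := fun n k =>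
    ENNReal.ofReal (‖f₁ k‖ ^ 2) / (ENNReal.ofReal (ε k) + ENNReal.ofReal (1 / (n + 1))) with hg
  have hgmeas : ∀ n, AEMeasurable (g n) volume := fun n =>
    haem.div ((ENNReal.measurable_ofReal.comp hε).aemeasurable.add aemeasurable_const)
  have hgmono : ∀ k, Monotone fun n => g n k := by
    intro k n m hnm
    have hc : (1 : ℝ) / (m + 1) ≤ 1 / (n + 1) := by
      apply one_div_le_one_div_of_le
      · positivity
      · have : (n : ℝ) ≤ m := Nat.cast_le.2 hnm
        linarith
    exact ENNReal.div_le_div le_rfl (add_le_add le_rfl (ENNReal.ofReal_le_ofReal hc))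
  have hgtend : ∀ k, Tendsto (fun n => g n k) atTop
      (𝓝 (ENNReal.ofReal (‖f₁ k‖ ^ 2) / ENNReal.ofReal (ε k))) := by
    intro k
    refine ENNReal.Tendsto.const_div ?_ (Or.inl ENNReal.ofReal_ne_top)
    have h0 : Tendsto (fun n : ℕ => (1 : ℝ) / (n + 1)) atTop (𝓝 0) :=
      tendsto_one_div_add_atTop_nhds_zero_nat
    have h1 := ENNReal.tendsto_ofReal h0
    simpa using (tendsto_const_nhds (x := ENNReal.ofReal (ε k))
      (f := atTop (α := ℕ))).add h1
  have hLtend : Tendsto (fun n => ∫⁻ k, g n k ∂volume) atTop (𝓝 ⊤) := by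
    rw [← hdiv]
    exact lintegral_tendsto_of_tendsto_of_monotone hgmeas
      (Eventually.of_forall hgmono) (Eventually.of_forall hgtend)
  -- W tends to atTop
  have hWtop : Tendsto W (nhdsWithin 0 (Ioi 0)) atTop := by
    rw [tendsto_atTop]
    intro M
    have hev : ∀ᶠ n in atTop, ENNReal.ofReal M < ∫⁻ k, g n k ∂volume :=
      hLtend.eventually (eventually_gt_nhds ENNReal.ofReal_lt_top)
    obtain ⟨n, hn⟩ := hev.exists
    set μ₀ : ℝ := 1 / (n + 1) with hμ₀
    have hμ₀pos : 0 < μ₀ := by positivity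
    have hgL : (∫⁻ k, g n k ∂volume) = ∫⁻ k, ENNReal.ofReal (‖f₁ k‖ ^ 2) /
        (ENNReal.ofReal (ε k) + ENNReal.ofReal μ₀) ∂volume := rfl
    have hM : M ≤ W μ₀ := by
      rw [hWeq μ₀ hμ₀pos, ← hgL]
      rcases le_or_gt M 0 with h | h
      · exact h.trans ENNReal.toReal_nonneg
      · refine (ENNReal.ofReal_le_iff_le_toReal ?_).1 hn.le
        rw [hgL]; exact hfin μ₀ hμ₀pos
    filter_upwards [Ioc_mem_nhdsGT_of_mem ⟨le_refl (0:ℝ), hμ₀pos⟩] with μ hμ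
    exact le_trans hM (hWmono μ μ₀ hμ.1 hμ.2)
  -- conclude
  have hx2 : 0 < x₁ ^ 2 := by positivity
  set q : ℝ := x₁ ^ 2 / (1 + x₁ ^ 2) with hqdef
  have hq : 0 < q := by positivity
  set ρ : ℝ := q * (lam₁ / 2) * U with hρdef
  have hρ : 0 < ρ := by positivity
  have hbound : Tendsto (fun μ => U + -ρ * W μ) (nhdsWithin 0 (Ioi 0)) atBot :=
    tendsto_atBot_add_const_left _ U ((hWtop.const_mul_atTop_of_neg (by linarith)))
  refine tendsto_atBot_mono' _ ?_ hbound
  filter_upwards [Ioc_mem_nhdsGT_of_mem ⟨le_refl (0:ℝ), half_pos hlam₁⟩] with μ hμ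
  obtain ⟨hμ0, hμle⟩ := hμ
  rw [hφ]
  have ha : μ - lam₁ ≤ -(lam₁ / 2) := by linarith
  have hb : U ≤ U - (1 + x₁ ^ 2) ^ 2 * (μ - lam₁) := by nlinarith [sq_nonneg (1 + x₁ ^ 2)]
  have hA : (1 + x₁ ^ 2) ^ 2 * (μ - lam₁) ≤ 0 := by nlinarith [sq_nonneg (1 + x₁ ^ 2)]
  have hc : q * (μ - lam₁) * (U - (1 + x₁ ^ 2) ^ 2 * (μ - lam₁)) ≤ -ρ := by
    have h1 : q * (μ - lam₁) ≤ q * (-(lam₁ / 2)) := by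
      exact mul_le_mul_of_nonneg_left ha hq.le
    have h2 : q * (μ - lam₁) * (U - (1 + x₁ ^ 2) ^ 2 * (μ - lam₁)) ≤ q * (μ - lam₁) * U := by
      have hneg : q * (μ - lam₁) ≤ 0 := by nlinarith
      exact mul_le_mul_of_nonpos_left hb hneg
    calc q * (μ - lam₁) * (U - (1 + x₁ ^ 2) ^ 2 * (μ - lam₁)) ≤ q * (μ - lam₁) * U := h2
      _ ≤ q * (-(lam₁ / 2)) * U := mul_le_mul_of_nonneg_right h1 hU.le
      _ = -ρ := by ring
  have hcW : q * (μ - lam₁) * (U - (1 + x₁ ^ 2) ^ 2 * (μ - lam₁)) * W μ ≤ -ρ * W μ :=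
    mul_le_mul_of_nonneg_right hc (hWnn μ hμ0)
  linarith
end

section
/- Let μ₂ > 0, μ₁ ∈ ℝ, ω ≠ 0, C₆ ∉ {0}, and define f₂(k) = −ω·C₆·((ε(k)+μ₁)/(ε(k)+μ₂))·f₁(k). Assume Γ₁ := ∫ ε(k)|f₁(k)|² dk < ∞ and assume the constraint 1 = −C₆·(1 − (μ₂−μ₁)·∫|f₁(k)|²/(ε(k)+μ₂) dk). Then f₂ is square-integrable, the integral Γ₁₂ := ∫ ε(k)·conj(f₁(k))·f₂(k) dk is a finite real number, and Γ₁₂ = −ω·(C₆·(Γ₁+μ₁) + μ₂). -/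
open MeasureTheory Set

lemma ratio_abs_bound {μ₁ μ₂ x : ℝ} (hμ₂ : 0 < μ₂) (hx : 0 ≤ x) :
    |(x + μ₁) / (x + μ₂)| ≤ 1 + |μ₁ - μ₂| / μ₂ := by
  have hxμ : 0 < x + μ₂ := by linarith
  have h1 : (x + μ₁) / (x + μ₂) = 1 + (μ₁ - μ₂) / (x + μ₂) := by
    field_simp
    ring
  rw [h1]
  calc |1 + (μ₁ - μ₂) / (x + μ₂)| ≤ |(1:ℝ)| + |(μ₁ - μ₂) / (x + μ₂)| := abs_add_le _ _
    _ = 1 + |μ₁ - μ₂| / (x + μ₂) := by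
        rw [abs_one, abs_div, abs_of_pos hxμ]
    _ ≤ 1 + |μ₁ - μ₂| / μ₂ := by
        gcongr
        linarith

/-- Let `μ₂ > 0`, `μ₁ ∈ ℝ`, `ω ≠ 0`, `C₆ ≠ 0`, and
`f₂ k = −ω·C₆·((ε k+μ₁)/(ε k+μ₂))·f₁ k`. Assume `Γ₁ := ∫ ε k·|f₁ k|² dk < ∞` and the
constraint `1 = −C₆·(1 − (μ₂−μ₁)·∫|f₁ k|²/(ε k+μ₂) dk)`. Then `f₂` is
square-integrable, `Γ₁₂ := ∫ ε k·conj(f₁ k)·f₂ k dk` is a finite real number, and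
`Γ₁₂ = −ω·(C₆·(Γ₁+μ₁) + μ₂)`. -/
theorem anderson_Gamma12_formula {d : ℕ} (hd : 0 < d)
    (ε : EuclideanSpace ℝ (Fin d) → ℝ) (hε : Measurable ε)
    (hε0 : ∀ᵐ k ∂volume, 0 ≤ ε k)
    (f₁ : EuclideanSpace ℝ (Fin d) → ℂ) (hf₁ : MemLp f₁ 2 volume)
    (hf₁norm : ∫ k, ‖f₁ k‖ ^ 2 = 1)
    (μ₁ μ₂ ω C₆ : ℝ) (hμ₂ : 0 < μ₂) (hω : ω ≠ 0) (hC₆ : C₆ ≠ 0)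
    (f₂ : EuclideanSpace ℝ (Fin d) → ℂ)
    (hf₂ : ∀ k, f₂ k =
      ((-ω * C₆ * ((ε k + μ₁) / (ε k + μ₂)) : ℝ) : ℂ) * f₁ k)
    (hΓ₁ : Integrable (fun k => ε k * ‖f₁ k‖ ^ 2) volume)
    (hconstraint :
      (1 : ℝ) = -C₆ * (1 - (μ₂ - μ₁) * ∫ k, ‖f₁ k‖ ^ 2 / (ε k + μ₂))) :
    MemLp f₂ 2 volume ∧
      Integrable (fun k => ((ε k : ℝ) : ℂ) * (starRingEnd ℂ) (f₁ k) * f₂ k) volume ∧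
      ∫ k, ((ε k : ℝ) : ℂ) * (starRingEnd ℂ) (f₁ k) * f₂ k =
        ((-ω * (C₆ * ((∫ k, ε k * ‖f₁ k‖ ^ 2) + μ₁) + μ₂) : ℝ) : ℂ) := by
  classical
  set R : ℝ := 1 + |μ₁ - μ₂| / μ₂ with hR
  have hR0 : 0 ≤ R := by positivity
  set M : ℝ := |ω * C₆| * R with hM
  have hM0 : 0 ≤ M := by positivity
  -- measurability of f₂
  have hcmeas : Measurable fun k => ((-ω * C₆ * ((ε k + μ₁) / (ε k + μ₂)) : ℝ) : ℂ) := by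
    apply Complex.measurable_ofReal.comp
    exact (measurable_const.mul ((hε.add_const μ₁).div (hε.add_const μ₂)))
  have hf₂meas : AEStronglyMeasurable f₂ volume := by
    have : AEStronglyMeasurable
        (fun k => ((-ω * C₆ * ((ε k + μ₁) / (ε k + μ₂)) : ℝ) : ℂ) * f₁ k) volume :=
      hcmeas.aestronglyMeasurable.mul hf₁.1
    exact this.congr (Filter.Eventually.of_forall fun k => (hf₂ k).symm)
  -- pointwise bound on f₂
  have hbound : ∀ᵐ k ∂volume, ‖f₂ k‖ ≤ ‖(M : ℂ) * f₁ k‖ := by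
    filter_upwards [hε0] with k hk
    rw [hf₂ k, norm_mul, norm_mul, Complex.norm_real, Complex.norm_real]
    have h1 : |(-ω * C₆ * ((ε k + μ₁) / (ε k + μ₂)))| ≤ M := by
      rw [abs_mul]
      have : |(-ω * C₆)| = |ω * C₆| := by rw [neg_mul, abs_neg]
      rw [this, hM]
      exact mul_le_mul_of_nonneg_left (ratio_abs_bound hμ₂ hk) (abs_nonneg _)
    have h2 : ‖M‖ = M := Real.norm_of_nonneg hM0
    rw [Real.norm_eq_abs, h2]
    exact mul_le_mul_of_nonneg_right h1 (norm_nonneg _)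
  have hf₂mem : MemLp f₂ 2 volume :=
    MemLp.of_le (hf₁.const_mul (M : ℂ)) hf₂meas hbound
  refine ⟨hf₂mem, ?_⟩
  -- real-valued integrand g
  set g : EuclideanSpace ℝ (Fin d) → ℝ :=
    fun k => ε k * (-ω * C₆ * ((ε k + μ₁) / (ε k + μ₂))) * ‖f₁ k‖ ^ 2 with hg
  have hpt : ∀ k, ((ε k : ℝ) : ℂ) * (starRingEnd ℂ) (f₁ k) * f₂ k = ((g k : ℝ) : ℂ) := by
    intro k
    rw [hf₂ k, hg]
    have hconj : (starRingEnd ℂ) (f₁ k) * f₁ k = ((‖f₁ k‖ ^ 2 : ℝ) : ℂ) := by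
      rw [← Complex.normSq_eq_conj_mul_self]
      norm_cast
      rw [Complex.normSq_eq_norm_sq]
    calc ((ε k : ℝ) : ℂ) * (starRingEnd ℂ) (f₁ k) *
          (((-ω * C₆ * ((ε k + μ₁) / (ε k + μ₂)) : ℝ) : ℂ) * f₁ k)
        = ((ε k : ℝ) : ℂ) * ((-ω * C₆ * ((ε k + μ₁) / (ε k + μ₂)) : ℝ) : ℂ) *
          ((starRingEnd ℂ) (f₁ k) * f₁ k) := by ring
      _ = ((g k : ℝ) : ℂ) := by rw [hconj, hg]; push_cast; ring
  have hgmeas : AEStronglyMeasurable g volume := by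
    have hm1 : Measurable fun k => ε k * (-ω * C₆ * ((ε k + μ₁) / (ε k + μ₂))) :=
      hε.mul (measurable_const.mul ((hε.add_const μ₁).div (hε.add_const μ₂)))
    have hm2 : AEStronglyMeasurable (fun k => ‖f₁ k‖ ^ 2) volume :=
      (hf₁.1.norm.pow 2)
    exact hm1.aestronglyMeasurable.mul hm2
  have hgint : Integrable g volume := by
    apply Integrable.mono' (hΓ₁.const_mul M) hgmeas
    filter_upwards [hε0] with k hk
    rw [hg]
    simp only [Real.norm_eq_abs]
    have : |ε k * (-ω * C₆ * ((ε k + μ₁) / (ε k + μ₂))) * ‖f₁ k‖ ^ 2|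
        = ε k * |(-ω * C₆ * ((ε k + μ₁) / (ε k + μ₂)))| * ‖f₁ k‖ ^ 2 := by
      rw [abs_mul, abs_mul, abs_of_nonneg hk, abs_of_nonneg (by positivity : (0:ℝ) ≤ ‖f₁ k‖^2)]
    rw [this]
    have h1 : |(-ω * C₆ * ((ε k + μ₁) / (ε k + μ₂)))| ≤ M := by
      rw [abs_mul, neg_mul, abs_neg, hM]
      exact mul_le_mul_of_nonneg_left (ratio_abs_bound hμ₂ hk) (abs_nonneg _)
    calc ε k * |(-ω * C₆ * ((ε k + μ₁) / (ε k + μ₂)))| * ‖f₁ k‖ ^ 2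
        ≤ ε k * M * ‖f₁ k‖ ^ 2 := by
          apply mul_le_mul_of_nonneg_right _ (by positivity)
          exact mul_le_mul_of_nonneg_left h1 hk
      _ = M * (ε k * ‖f₁ k‖ ^ 2) := by ring
  have hintC : Integrable (fun k => ((ε k : ℝ) : ℂ) * (starRingEnd ℂ) (f₁ k) * f₂ k) volume := by
    have : Integrable (fun k => ((g k : ℝ) : ℂ)) volume := hgint.ofReal
    exact this.congr (Filter.Eventually.of_forall fun k => (hpt k).symm)
  refine ⟨hintC, ?_⟩
  -- compute the integral
  have hint2 : Integrable (fun k => ‖f₁ k‖ ^ 2) volume :=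
    (memLp_two_iff_integrable_sq_norm hf₁.1).mp hf₁
  have hm3 : AEStronglyMeasurable (fun k => ‖f₁ k‖ ^ 2 / (ε k + μ₂)) volume :=
    ((hf₁.1.norm.aemeasurable.pow_const 2).div
      ((hε.add_const μ₂).aemeasurable)).aestronglyMeasurable
  have hint3 : Integrable (fun k => ‖f₁ k‖ ^ 2 / (ε k + μ₂)) volume := by
    apply Integrable.mono' (hint2.const_mul (1 / μ₂)) hm3
    filter_upwards [hε0] with k hk
    have hxμ : 0 < ε k + μ₂ := by linarith
    rw [Real.norm_eq_abs, abs_div, abs_of_pos hxμ,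
      abs_of_nonneg (by positivity : (0:ℝ) ≤ ‖f₁ k‖ ^ 2)]
    calc ‖f₁ k‖ ^ 2 / (ε k + μ₂) ≤ ‖f₁ k‖ ^ 2 / μ₂ := by
          gcongr
          linarith
      _ = 1 / μ₂ * ‖f₁ k‖ ^ 2 := by ring
  -- a.e. decomposition of g
  have hdecomp : g =ᵐ[volume] fun k =>
      -ω * C₆ * (ε k * ‖f₁ k‖ ^ 2) + (-ω * C₆ * (μ₁ - μ₂)) * ‖f₁ k‖ ^ 2 +
        (-ω * C₆ * μ₂ * (μ₂ - μ₁)) * (‖f₁ k‖ ^ 2 / (ε k + μ₂)) := by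
    filter_upwards [hε0] with k hk
    have hxμ : (ε k + μ₂) ≠ 0 := by positivity
    rw [hg]
    field_simp
    ring
  have i1 : Integrable (fun k => -ω * C₆ * (ε k * ‖f₁ k‖ ^ 2)) volume := hΓ₁.const_mul _
  have i2 : Integrable (fun k => -ω * C₆ * (μ₁ - μ₂) * ‖f₁ k‖ ^ 2) volume := hint2.const_mul _
  have i3 : Integrable (fun k => -ω * C₆ * μ₂ * (μ₂ - μ₁) * (‖f₁ k‖ ^ 2 / (ε k + μ₂))) volume :=
    hint3.const_mul _
  have i12 : Integrable (fun k => -ω * C₆ * (ε k * ‖f₁ k‖ ^ 2) +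
      -ω * C₆ * (μ₁ - μ₂) * ‖f₁ k‖ ^ 2) volume := i1.add i2
  have hI := integral_congr_ae hdecomp
  rw [integral_add i12 i3, integral_add i1 i2,
      integral_const_mul, integral_const_mul, integral_const_mul, hf₁norm] at hI
  have key : ∫ k, g k =
      -ω * (C₆ * ((∫ k, ε k * ‖f₁ k‖ ^ 2) + μ₁) + μ₂) := by
    rw [hI]
    linear_combination (ω * μ₂) * hconstraint
  calc ∫ k, ((ε k : ℝ) : ℂ) * (starRingEnd ℂ) (f₁ k) * f₂ k
      = ∫ k, ((g k : ℝ) : ℂ) := integral_congr_ae (Filter.Eventually.of_forall hpt)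
    _ = (((∫ k, g k : ℝ)) : ℂ) := integral_ofReal
    _ = ((-ω * (C₆ * ((∫ k, ε k * ‖f₁ k‖ ^ 2) + μ₁) + μ₂) : ℝ) : ℂ) := by rw [key]
end

section
/- Let μ₂ > 0, μ₁ ∈ ℝ, ω ≠ 0, C₆ ≠ 0, and define f₂(k) = −ω·C₆·((ε(k)+μ₁)/(ε(k)+μ₂))·f₁(k). Assume Γ₁ := ∫ ε(k)|f₁(k)|² dk < ∞, assume the constraint 1 = −C₆·(1 − (μ₂−μ₁)·∫|f₁(k)|²/(ε(k)+μ₂) dk), and assume ∫|f₂(k)|² dk = 1. Then Γ₂ := ∫ ε(k)|f₂(k)|² dk is finite and Γ₂ = ω²·C₆·(C₆·(Γ₁+μ₁) + μ₂ − μ₁) − μ₂. -/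
open MeasureTheory Set

/-- Let `μ₂ > 0`, `μ₁ ∈ ℝ`, `ω ≠ 0`, `C₆ ≠ 0`, and
`f₂ k = −ω·C₆·((ε k+μ₁)/(ε k+μ₂))·f₁ k`. Assume `Γ₁ := ∫ ε k·|f₁ k|² dk < ∞`, the
constraint `1 = −C₆·(1 − (μ₂−μ₁)·∫|f₁ k|²/(ε k+μ₂) dk)`, and `∫|f₂ k|² dk = 1`.
Then `Γ₂ := ∫ ε k·|f₂ k|² dk` is finite and
`Γ₂ = ω²·C₆·(C₆·(Γ₁+μ₁) + μ₂ − μ₁) − μ₂`. -/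
theorem anderson_Gamma2_formula {d : ℕ} (hd : 0 < d)
    (ε : EuclideanSpace ℝ (Fin d) → ℝ) (hε : Measurable ε)
    (hε0 : ∀ᵐ k ∂volume, 0 ≤ ε k)
    (f₁ : EuclideanSpace ℝ (Fin d) → ℂ) (hf₁ : MemLp f₁ 2 volume)
    (hf₁norm : ∫ k, ‖f₁ k‖ ^ 2 = 1)
    (μ₁ μ₂ ω C₆ : ℝ) (hμ₂ : 0 < μ₂) (hω : ω ≠ 0) (hC₆ : C₆ ≠ 0)
    (f₂ : EuclideanSpace ℝ (Fin d) → ℂ)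
    (hf₂ : ∀ k, f₂ k =
      ((-ω * C₆ * ((ε k + μ₁) / (ε k + μ₂)) : ℝ) : ℂ) * f₁ k)
    (hΓ₁ : Integrable (fun k => ε k * ‖f₁ k‖ ^ 2) volume)
    (hconstraint :
      (1 : ℝ) = -C₆ * (1 - (μ₂ - μ₁) * ∫ k, ‖f₁ k‖ ^ 2 / (ε k + μ₂)))
    (hf₂norm : ∫ k, ‖f₂ k‖ ^ 2 = 1) :
    Integrable (fun k => ε k * ‖f₂ k‖ ^ 2) volume ∧
      ∫ k, ε k * ‖f₂ k‖ ^ 2 =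
        ω ^ 2 * C₆ * (C₆ * ((∫ k, ε k * ‖f₁ k‖ ^ 2) + μ₁) + μ₂ - μ₁) - μ₂ := by
  -- basic integrability
  have h1 : Integrable (fun k => ‖f₁ k‖ ^ 2) volume :=
    (memLp_two_iff_integrable_sq_norm hf₁.1).mp hf₁
  -- pointwise norm of f₂
  have hnorm2 : ∀ k, ‖f₂ k‖ ^ 2 =
      ω ^ 2 * C₆ ^ 2 * ((ε k + μ₁) / (ε k + μ₂)) ^ 2 * ‖f₁ k‖ ^ 2 := by
    intro k
    rw [hf₂ k, norm_mul, Complex.norm_real, Real.norm_eq_abs, mul_pow, sq_abs]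
    ring
  -- a.e. facts
  have hpos : ∀ᵐ k ∂volume, 0 < ε k + μ₂ := by
    filter_upwards [hε0] with k hk; linarith
  -- measurability bits
  have hmf₂ : AEStronglyMeasurable f₂ volume := by
    have : AEStronglyMeasurable
        (fun k => ((-ω * C₆ * ((ε k + μ₁) / (ε k + μ₂)) : ℝ) : ℂ) * f₁ k) volume := by
      refine AEStronglyMeasurable.mul ?_ hf₁.1
      exact (Complex.measurable_ofReal.comp
        ((measurable_const.mul ((hε.add_const μ₁).div (hε.add_const μ₂))))).aestronglyMeasurable
    exact this.congr (Filter.Eventually.of_forall fun k => (hf₂ k).symm)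
  -- integrability of ‖f₁‖²/(ε+μ₂)
  have hI : Integrable (fun k => ‖f₁ k‖ ^ 2 / (ε k + μ₂)) volume := by
    refine Integrable.mono' (h1.const_mul (1 / μ₂)) ?_ ?_
    · exact ((hf₁.1.norm.aemeasurable.pow_const 2).div
        ((hε.aemeasurable.add_const μ₂))).aestronglyMeasurable
    · filter_upwards [hε0] with k hk
      have hk2 : (0:ℝ) < ε k + μ₂ := by linarith
      rw [Real.norm_eq_abs, abs_div, abs_of_nonneg (by positivity : (0:ℝ) ≤ ‖f₁ k‖^2),
        abs_of_pos hk2, div_le_iff₀ hk2]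
      have hX : (0:ℝ) ≤ ‖f₁ k‖ ^ 2 := by positivity
      rw [one_div]
      nlinarith [mul_nonneg (mul_nonneg hk (le_of_lt (inv_pos.mpr hμ₂))) hX,
        mul_inv_cancel₀ (ne_of_gt hμ₂)]
  -- integrability of ‖f₂‖²
  have h2 : Integrable (fun k => ‖f₂ k‖ ^ 2) volume := by
    refine Integrable.mono' (h1.const_mul
      (ω ^ 2 * C₆ ^ 2 * ((μ₂ + |μ₁|) / μ₂) ^ 2)) (hmf₂.norm.aemeasurable.pow_const 2).aestronglyMeasurable ?_
    filter_upwards [hε0] with k hk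
    rw [Real.norm_eq_abs, abs_of_nonneg (by positivity), hnorm2 k]
    have hk2 : (0:ℝ) < ε k + μ₂ := by linarith
    have hr : ((ε k + μ₁) / (ε k + μ₂)) ^ 2 ≤ ((μ₂ + |μ₁|) / μ₂) ^ 2 := by
      rw [div_pow, div_pow, div_le_div_iff₀ (by positivity) (by positivity)]
      have h3 : |ε k + μ₁| ≤ ε k + |μ₁| := by
        calc |ε k + μ₁| ≤ |ε k| + |μ₁| := abs_add_le _ _
        _ = ε k + |μ₁| := by rw [abs_of_nonneg hk]
      have h4 : (ε k + μ₁)^2 ≤ (ε k + |μ₁|)^2 := by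
        rw [← sq_abs (ε k + μ₁)]
        exact pow_le_pow_left₀ (abs_nonneg _) h3 2
      have h5 : (ε k + |μ₁|) * μ₂ ≤ (ε k + μ₂) * (μ₂ + |μ₁|) := by nlinarith [abs_nonneg μ₁]
      calc (ε k + μ₁)^2 * μ₂^2 ≤ ((ε k + |μ₁|) * μ₂)^2 := by rw [mul_pow]; nlinarith
      _ ≤ ((ε k + μ₂) * (μ₂ + |μ₁|))^2 := by
          apply pow_le_pow_left₀ (by positivity) h5
      _ = (μ₂ + |μ₁|)^2 * (ε k + μ₂)^2 := by ring
    have := mul_le_mul_of_nonneg_right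
      (mul_le_mul_of_nonneg_left hr (by positivity : (0:ℝ) ≤ ω ^ 2 * C₆ ^ 2))
      (sq_nonneg ‖f₁ k‖)
    nlinarith [this]
  -- the key pointwise identity
  set a : ℝ := ω ^ 2 * C₆ ^ 2 with ha
  have key : ∀ᵐ k ∂volume, ε k * ‖f₂ k‖ ^ 2 =
      a * (ε k * ‖f₁ k‖ ^ 2) + (a * (2 * μ₁ - μ₂)) * ‖f₁ k‖ ^ 2
        + (a * (μ₁ - μ₂) ^ 2) * (‖f₁ k‖ ^ 2 / (ε k + μ₂)) - μ₂ * ‖f₂ k‖ ^ 2 := by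
    filter_upwards [hpos] with k hk
    rw [hnorm2 k]
    have hk' : ε k + μ₂ ≠ 0 := ne_of_gt hk
    field_simp
    ring
  -- g integrable
  have hg : Integrable (fun k =>
      a * (ε k * ‖f₁ k‖ ^ 2) + (a * (2 * μ₁ - μ₂)) * ‖f₁ k‖ ^ 2
        + (a * (μ₁ - μ₂) ^ 2) * (‖f₁ k‖ ^ 2 / (ε k + μ₂)) - μ₂ * ‖f₂ k‖ ^ 2) volume := by
    exact (((hΓ₁.const_mul a).add (h1.const_mul _)).add (hI.const_mul _)).sub (h2.const_mul μ₂)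
  have hint : Integrable (fun k => ε k * ‖f₂ k‖ ^ 2) volume := hg.congr (key.mono fun k h => h.symm)
  refine ⟨hint, ?_⟩
  have hA : Integrable (fun k => a * (ε k * ‖f₁ k‖ ^ 2)) volume := hΓ₁.const_mul a
  have hB : Integrable (fun k => (a * (2 * μ₁ - μ₂)) * ‖f₁ k‖ ^ 2) volume := h1.const_mul _
  have hC : Integrable (fun k => (a * (μ₁ - μ₂) ^ 2) * (‖f₁ k‖ ^ 2 / (ε k + μ₂))) volume :=
    hI.const_mul _
  have hD : Integrable (fun k => μ₂ * ‖f₂ k‖ ^ 2) volume := h2.const_mul μ₂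
  have hAB : Integrable (fun k => a * (ε k * ‖f₁ k‖ ^ 2)
      + (a * (2 * μ₁ - μ₂)) * ‖f₁ k‖ ^ 2) volume := hA.add hB
  have hABC : Integrable (fun k => a * (ε k * ‖f₁ k‖ ^ 2)
      + (a * (2 * μ₁ - μ₂)) * ‖f₁ k‖ ^ 2
      + (a * (μ₁ - μ₂) ^ 2) * (‖f₁ k‖ ^ 2 / (ε k + μ₂))) volume := hAB.add hC
  have hval : ∫ k, ε k * ‖f₂ k‖ ^ 2 =
      a * (∫ k, ε k * ‖f₁ k‖ ^ 2) + (a * (2 * μ₁ - μ₂)) * (∫ k, ‖f₁ k‖ ^ 2)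
        + (a * (μ₁ - μ₂) ^ 2) * (∫ k, ‖f₁ k‖ ^ 2 / (ε k + μ₂)) - μ₂ * (∫ k, ‖f₂ k‖ ^ 2) := by
    rw [integral_congr_ae key,
      integral_sub hABC hD,
      integral_add hAB hC,
      integral_add hA hB,
      integral_const_mul, integral_const_mul, integral_const_mul, integral_const_mul]
  rw [hval, hf₁norm, hf₂norm, ha]
  set I := ∫ k, ‖f₁ k‖ ^ 2 / (ε k + μ₂)
  linear_combination (ω ^ 2 * C₆ * (μ₁ - μ₂)) * hconstraint
end

section
/- Let x₁ > 0, λ₁, ε_d, μ₂ ∈ ℝ and U > 0, and define C₁ = U/(1+x₁²)², C₂ = x₁·C₁, C₃ = x₁²·C₁, C₆ = √(1+x₁²) − 1, C₇ = −λ₁, C₈ = (1/x₁²)·[(2+x₁²)·ε_d + (2−x₁²)·λ₁ − 2√(1+x₁²)·(ε_d + λ₁·(1−x₁²))], and Γ₁ = (λ₁+ε_d)/x₁² − λ₁. Assume U ≠ (1+x₁²)²·(λ₁−μ₂) (equivalently C₁+C₇+μ₂ ≠ 0). Then the quantity μ₁ := −[2C₂² + (C₁+C₇+μ₂)·(−2C₃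 − C₈ + C₆·(μ₂ + C₆·Γ₁))] / [C₆·(C₆+1)·(C₁+C₇+μ₂)] equals x₁²·λ₁/((1+x₁²) − √(1+x₁²)) − μ₂/√(1+x₁²) − 2U·x₁²·(λ₁−μ₂)/([U − (1+x₁²)²·(λ₁−μ₂)]·[(1+x₁²) − √(1+x₁²)]). In particular the impurity energy ε_d cancels from the expression. -/
set_option maxHeartbeats 1000000 in
private lemma anderson_aux (s lam₁ εd μ₂ U : ℝ) (hs1 : 1 < s)
    (hU' : U - (s ^ 2) ^ 2 * (lam₁ - μ₂) ≠ 0) :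
    -(2 * ((s ^ 2 - 1) * (U / (s ^ 2) ^ 2) ^ 2) +
          (U / (s ^ 2) ^ 2 + -lam₁ + μ₂) *
            (-2 * ((s ^ 2 - 1) * (U / (s ^ 2) ^ 2)) -
              1 / (s ^ 2 - 1) *
                ((2 + (s ^ 2 - 1)) * εd + (2 - (s ^ 2 - 1)) * lam₁ -
                  2 * s * (εd + lam₁ * (1 - (s ^ 2 - 1)))) +
              (s - 1) * (μ₂ + (s - 1) * ((lam₁ + εd) / (s ^ 2 - 1) - lam₁)))) /
        ((s - 1) * (s - 1 + 1) * (U / (s ^ 2) ^ 2 + -lam₁ + μ₂)) =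
      (s ^ 2 - 1) * lam₁ / (s ^ 2 - s) - μ₂ / s -
        2 * U * (s ^ 2 - 1) * (lam₁ - μ₂) /
          ((U - (s ^ 2) ^ 2 * (lam₁ - μ₂)) * (s ^ 2 - s)) := by
  have hs0 : s ≠ 0 := by positivity
  have hsm1 : s - 1 ≠ 0 := by intro h; linarith
  have hsp1 : s + 1 ≠ 0 := by intro h; linarith
  have h21 : s ^ 2 - 1 ≠ 0 := by
    intro h
    have : (s - 1) * (s + 1) = 0 := by linear_combination h
    rcases mul_eq_zero.mp this with h' | h' <;> [exact hsm1 h'; exact hsp1 h']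
  have h2s : s ^ 2 - s ≠ 0 := by
    intro h
    have : s * (s - 1) = 0 := by linear_combination h
    rcases mul_eq_zero.mp this with h' | h' <;> [exact hs0 h'; exact hsm1 h']
  have key : U / (s ^ 2) ^ 2 + -lam₁ + μ₂ =
      (U - (s ^ 2) ^ 2 * (lam₁ - μ₂)) / (s ^ 2) ^ 2 := by
    field_simp
    ring
  rw [key]
  have h4 : U - s ^ 4 * (lam₁ - μ₂) ≠ 0 := by
    intro h; exact hU' (by linear_combination h)
  have h5 : s * U - s ^ 5 * lam₁ + s ^ 5 * μ₂ ≠ 0 := by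
    intro h; exact mul_ne_zero hs0 h4 (by linear_combination h)
  have h6 : -(s ^ 4 * lam₁) + s ^ 4 * μ₂ + U ≠ 0 := by
    intro h; exact h4 (by linear_combination h)
  field_simp
  ring_nf
  field_simp

/-- With the coefficients `C₁,…,C₈` of the first unitary transformation of the Anderson
impurity model and `Γ₁ = (λ₁+εd)/x₁² − λ₁`, and assuming `U ≠ (1+x₁²)²(λ₁−μ₂)`
(i.e. `C₁+C₇+μ₂ ≠ 0`), the quantity
`μ₁ = −[2C₂² + (C₁+C₇+μ₂)(−2C₃ − C₈ + C₆(μ₂ + C₆Γ₁))]/[C₆(C₆+1)(C₁+C₇+μ₂)]`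
equals
`x₁²λ₁/((1+x₁²) − √(1+x₁²)) − μ₂/√(1+x₁²)
  − 2Ux₁²(λ₁−μ₂)/([U − (1+x₁²)²(λ₁−μ₂)]·[(1+x₁²) − √(1+x₁²)])`;
in particular the impurity energy `εd` cancels from the expression. -/
theorem anderson_mu1_formula (x₁ lam₁ εd μ₂ U : ℝ) (hx₁ : 0 < x₁) (hU : 0 < U)
    (C₁ C₂ C₃ C₆ C₇ C₈ Γ₁ : ℝ)
    (hC₁ : C₁ = U / (1 + x₁ ^ 2) ^ 2)
    (hC₂ : C₂ = x₁ * C₁)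
    (hC₃ : C₃ = x₁ ^ 2 * C₁)
    (hC₆ : C₆ = Real.sqrt (1 + x₁ ^ 2) - 1)
    (hC₇ : C₇ = -lam₁)
    (hC₈ : C₈ = (1 / x₁ ^ 2) *
      ((2 + x₁ ^ 2) * εd + (2 - x₁ ^ 2) * lam₁ -
        2 * Real.sqrt (1 + x₁ ^ 2) * (εd + lam₁ * (1 - x₁ ^ 2))))
    (hΓ₁ : Γ₁ = (lam₁ + εd) / x₁ ^ 2 - lam₁)
    (hne : U ≠ (1 + x₁ ^ 2) ^ 2 * (lam₁ - μ₂)) :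
    -(2 * C₂ ^ 2 + (C₁ + C₇ + μ₂) * (-2 * C₃ - C₈ + C₆ * (μ₂ + C₆ * Γ₁))) /
        (C₆ * (C₆ + 1) * (C₁ + C₇ + μ₂)) =
      x₁ ^ 2 * lam₁ / ((1 + x₁ ^ 2) - Real.sqrt (1 + x₁ ^ 2)) -
        μ₂ / Real.sqrt (1 + x₁ ^ 2) -
        2 * U * x₁ ^ 2 * (lam₁ - μ₂) /
          ((U - (1 + x₁ ^ 2) ^ 2 * (lam₁ - μ₂)) *
            ((1 + x₁ ^ 2) - Real.sqrt (1 + x₁ ^ 2))) := by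
  set s := Real.sqrt (1 + x₁ ^ 2) with hs
  have hx2 : (0:ℝ) < 1 + x₁ ^ 2 := by positivity
  have hs2 : (1:ℝ) + x₁ ^ 2 = s ^ 2 := (Real.sq_sqrt hx2.le).symm
  have hs1 : 1 < s := by
    rw [hs]
    exact (Real.lt_sqrt (by norm_num)).mpr (by nlinarith)
  have hx2s : x₁ ^ 2 = s ^ 2 - 1 := by linarith
  subst hC₁ hC₂ hC₃ hC₆ hC₇ hC₈ hΓ₁
  rw [mul_pow]
  rw [hs2] at hne ⊢
  rw [hx2s]
  have goal := anderson_aux s lam₁ εd μ₂ U hs1 (sub_ne_zero.mpr hne)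
  convert goal using 3 <;> ring
end
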